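/- The nonabelian exterior square of the Heisenberg Lie algebra satisfies H(1) ∧ H(1) ≅ A(3), the 3-dimensional abelian Lie algebra, and H(m) ∧ H(m) ≅ A(2m² − m) for all m ≥ 2. -/

import Mathlib

open Module Function

universe u v

/-! ### Product of Lie algebras -/

section ProdLie

variable (k : Type) [Field k]
variable (L₁ : Type*) (L₂ : Type*) [LieRing L₁] [LieRing L₂]

instance Prod.instLieRing : LieRing (L₁ × L₂) where
  bracket x y := (⁅x.1, y.1⁆, ⁅x.2, y.2⁆)
  add_lie x y z := by ext <;> exact add_lie _ _ _
  lie_add x y z := by ext <;> exact lie_add _ _ _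
  lie_self x := by ext <;> exact lie_self _
  leibniz_lie x y z := by ext <;> exact leibniz_lie _ _ _

instance Prod.instLieAlgebra [LieAlgebra k L₁] [LieAlgebra k L₂] :
    LieAlgebra k (L₁ × L₂) where
  lie_smul c x y := by ext <;> exact lie_smul _ _ _

end ProdLie

section Defs

variable (k : Type) [Field k]
variable (L : Type u) [LieRing L] [LieAlgebra k L]

/-- The derived subalgebra `L² = ⁅L, L⁆` as a Lie ideal. -/
def derived : LieIdeal k L := ⁅(⊤ : LieIdeal k L), (⊤ : LieIdeal k L)⁆

/-- A Lie algebra is capable if it is isomorphic to `H / Z(H)` for some Lie algebra `H`. -/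
def IsCapable : Prop :=
  ∃ (H : Type u) (_ : LieRing H) (_ : LieAlgebra k H),
    Nonempty (L ≃ₗ⁅k⁆ H ⧸ LieAlgebra.center k H)

/-- A surjective Lie algebra morphism with central kernel. -/
def IsCentralExtension {E : Type u} [LieRing E] [LieAlgebra k E] (φ : E →ₗ⁅k⁆ L) : Prop :=
  Function.Surjective φ ∧ φ.ker ≤ LieAlgebra.center k E

/-- The epicenter `Z^*(L)`: the intersection of the images `φ(Z(E))` over all central
extensions `φ : E → L`. -/
def epicenter : LieIdeal k L :=
  sInf {I : LieIdeal k L |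
    ∃ (E : Type u) (_ : LieRing E) (_ : LieAlgebra k E) (φ : E →ₗ⁅k⁆ L),
      IsCentralExtension k L φ ∧ (I : Set L) = φ '' (LieAlgebra.center k E)}

/-! ### The nonabelian exterior square -/

/-- The defining relations of the nonabelian exterior square of a Lie algebra. -/
def exteriorRels : Set (FreeLieAlgebra k (L × L)) :=
  {a | (∃ (x x' y : L), a = FreeLieAlgebra.of k (x + x', y) - FreeLieAlgebra.of k (x, y)
          - FreeLieAlgebra.of k (x', y)) ∨
       (∃ (x y y' : L), a = FreeLieAlgebra.of k (x, y + y') - FreeLieAlgebra.of k (x, y)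
          - FreeLieAlgebra.of k (x, y')) ∨
       (∃ (c : k) (x y : L), a = FreeLieAlgebra.of k (c • x, y) - c • FreeLieAlgebra.of k (x, y)) ∨
       (∃ (c : k) (x y : L), a = FreeLieAlgebra.of k (x, c • y) - c • FreeLieAlgebra.of k (x, y)) ∨
       (∃ (x x' y : L), a = FreeLieAlgebra.of k (⁅x, x'⁆, y) - FreeLieAlgebra.of k (x, ⁅x', y⁆)
          + FreeLieAlgebra.of k (x', ⁅x, y⁆)) ∨
       (∃ (x y y' : L), a = FreeLieAlgebra.of k (x, ⁅y, y'⁆) - FreeLieAlgebra.of k (⁅y', x⁆, y)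
          + FreeLieAlgebra.of k (⁅y, x⁆, y')) ∨
       (∃ (x y x' y' : L), a = ⁅FreeLieAlgebra.of k (x, y), FreeLieAlgebra.of k (x', y')⁆
          + FreeLieAlgebra.of k (⁅y, x⁆, ⁅x', y'⁆)) ∨
       (∃ (x : L), a = FreeLieAlgebra.of k (x, x))}

/-- The ideal of relations of the nonabelian exterior square. -/
noncomputable def exteriorIdeal : LieIdeal k (FreeLieAlgebra k (L × L)) :=
  LieSubmodule.lieSpan k _ (exteriorRels k L)

/-- The nonabelian exterior square `L ∧ L`. -/
abbrev ExteriorSquare := FreeLieAlgebra k (L × L) ⧸ exteriorIdeal k L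

variable {L} in
/-- The element `x ∧ y` of the nonabelian exterior square. -/
noncomputable def wedge (x y : L) : ExteriorSquare k L :=
  LieSubmodule.Quotient.mk' (exteriorIdeal k L) (FreeLieAlgebra.of k (x, y))

/-- The exterior center `Z^∧(L) = {x | x ∧ y = 0 for all y}`. -/
def exteriorCenter : Set L := {x | ∀ y : L, wedge k x y = 0}

end Defs

section Defs2

variable (k : Type) [Field k]
variable (L : Type u) [LieRing L] [LieAlgebra k L]

/-- The canonical free presentation `F(L) → L`. -/
noncomputable def pres : FreeLieAlgebra k L →ₗ⁅k⁆ L := FreeLieAlgebra.lift k id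

/-- The Schur multiplier computed from a presentation `ρ : F(L) → L'`,
namely `(ker ρ ∩ F²) / ⁅ker ρ, F⁆`. -/
abbrev multOf {L' : Type v} [LieRing L'] [LieAlgebra k L']
    (ρ : FreeLieAlgebra k L →ₗ⁅k⁆ L') : Type _ :=
  (ρ.ker ⊓ derived k (FreeLieAlgebra k L)).toSubmodule ⧸
    ((⁅ρ.ker, (⊤ : LieIdeal k (FreeLieAlgebra k L))⁆ :
        LieIdeal k (FreeLieAlgebra k L)).toSubmodule.comap
      (ρ.ker ⊓ derived k (FreeLieAlgebra k L)).toSubmodule.subtype)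

/-- The Schur multiplier `M(L) = (R ∩ F²)/⁅R, F⁆` for the canonical free
presentation `0 → R → F(L) → L → 0`. -/
noncomputable abbrev SchurMultiplier : Type _ := multOf k L (pres k L)

/-- The quotient map `L → L ⧸ N` as a morphism of Lie algebras. -/
def lieQuotMk (N : LieIdeal k L) : L →ₗ⁅k⁆ L ⧸ N :=
  { toLinearMap := (N : Submodule k L).mkQ
    map_lie' := rfl }

/-- The canonical presentation `F(L) → L ⧸ N` of a quotient of `L`. -/
noncomputable def presQ (N : LieIdeal k L) : FreeLieAlgebra k L →ₗ⁅k⁆ L ⧸ N :=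
  (lieQuotMk k L N).comp (pres k L)

end Defs2

section maps

variable (k : Type) [Field k]
variable (L : Type u) [LieRing L] [LieAlgebra k L]

lemma ker_le_kerQ (N : LieIdeal k L) : (pres k L).ker ≤ (presQ k L N).ker := by
  intro x hx
  rw [LieHom.mem_ker] at hx ⊢
  simp [presQ, LieHom.comp_apply, hx, lieQuotMk]

/-- The natural map `M(L) → M(L/N)` on Schur multipliers induced by a
(central) ideal `N` of `L`. -/
noncomputable def multMap (N : LieIdeal k L) :
    SchurMultiplier k L →ₗ[k] multOf k L (presQ k L N) :=
  Submodule.mapQ _ _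
    (Submodule.inclusion (by
      exact_mod_cast inf_le_inf_right (derived k (FreeLieAlgebra k L)) (ker_le_kerQ k L N)))
    (by
      intro x hx
      simp only [Submodule.mem_comap] at hx ⊢
      have hmono : (⁅(pres k L).ker, (⊤ : LieIdeal k (FreeLieAlgebra k L))⁆ :
          LieIdeal k (FreeLieAlgebra k L)) ≤
          ⁅(presQ k L N).ker, (⊤ : LieIdeal k (FreeLieAlgebra k L))⁆ :=
        LieSubmodule.mono_lie_left _ (ker_le_kerQ k L N)
      exact hmono hx)

end maps

section lift

variable {k : Type} [Field k]
variable {L : Type u} [LieRing L] [LieAlgebra k L]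
variable {L' : Type v} [LieRing L'] [LieAlgebra k L']

/-- Universal property of quotients of Lie algebras. -/
def lieQuotLift (I : LieIdeal k L) (f : L →ₗ⁅k⁆ L') (h : I ≤ f.ker) : (L ⧸ I) →ₗ⁅k⁆ L' :=
  { toLinearMap := (I : Submodule k L).liftQ f.toLinearMap (fun x hx => by
      have := h hx; rwa [LieHom.mem_ker] at this)
    map_lie' := by
      rintro ⟨x⟩ ⟨y⟩
      exact f.map_lie x y }

@[simp] lemma lieQuotLift_mk (I : LieIdeal k L) (f : L →ₗ⁅k⁆ L') (h : I ≤ f.ker) (x : L) :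
    lieQuotLift I f h (lieQuotMk k L I x) = f x := rfl

end lift

section extmaps

variable (k : Type) [Field k]
variable (L : Type u) [LieRing L] [LieAlgebra k L]

/-- `x ∧ y` rewritten via the quotient morphism. -/
lemma wedge_def (x y : L) :
    wedge k x y = lieQuotMk k _ (exteriorIdeal k L) (FreeLieAlgebra.of k (x, y)) := rfl

/-- The lift to the free Lie algebra of the map `(x, y) ↦ x ∧ y` valued in the
exterior square of a quotient of `L`. -/
noncomputable def extAux (N : LieIdeal k L) :
    FreeLieAlgebra k (L × L) →ₗ⁅k⁆ ExteriorSquare k (L ⧸ N) :=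
  FreeLieAlgebra.lift k fun p => wedge k (lieQuotMk k L N p.1) (lieQuotMk k L N p.2)

lemma wedge_mem_rel_zero {M : Type v} [LieRing M] [LieAlgebra k M]
    {a : FreeLieAlgebra k (M × M)} (ha : a ∈ exteriorRels k M) :
    lieQuotMk k _ (exteriorIdeal k M) a = 0 := by
  have h : a ∈ exteriorIdeal k M := LieSubmodule.subset_lieSpan ha
  show (exteriorIdeal k M : Submodule k (FreeLieAlgebra k (M × M))).mkQ a = 0
  rw [Submodule.mkQ_apply, Submodule.Quotient.mk_eq_zero]
  exact h

lemma extAux_rels (N : LieIdeal k L) : exteriorIdeal k L ≤ (extAux k L N).ker := by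
  rw [exteriorIdeal, LieSubmodule.lieSpan_le]
  intro a ha
  rw [SetLike.mem_coe, LieHom.mem_ker]
  set q := lieQuotMk k L N with hq
  have key : ∀ x y : L, extAux k L N (FreeLieAlgebra.of k (x, y)) =
      lieQuotMk k _ (exteriorIdeal k (L ⧸ N)) (FreeLieAlgebra.of k (q x, q y)) := by
    intro x y; rw [extAux, FreeLieAlgebra.lift_of_apply]; rfl
  obtain h|h|h|h|h|h|h|h := ha
  · obtain ⟨x, x', y, rfl⟩ := h
    simp only [map_sub, key]
    rw [← map_sub, ← map_sub]
    apply wedge_mem_rel_zero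
    exact Or.inl ⟨q x, q x', q y, by rw [map_add]⟩
  · obtain ⟨x, y, y', rfl⟩ := h
    simp only [map_sub, key]
    rw [← map_sub, ← map_sub]
    apply wedge_mem_rel_zero
    exact Or.inr (Or.inl ⟨q x, q y, q y', by rw [map_add]⟩)
  · obtain ⟨c, x, y, rfl⟩ := h
    simp only [map_sub, map_smul, key]
    rw [← map_smul (lieQuotMk k _ (exteriorIdeal k (L ⧸ N))) c
      (FreeLieAlgebra.of k (q x, q y)), ← map_sub]
    apply wedge_mem_rel_zero
    exact Or.inr (Or.inr (Or.inl ⟨c, q x, q y, rfl⟩))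
  · obtain ⟨c, x, y, rfl⟩ := h
    simp only [map_sub, map_smul, key]
    rw [← map_smul (lieQuotMk k _ (exteriorIdeal k (L ⧸ N))) c
      (FreeLieAlgebra.of k (q x, q y)), ← map_sub]
    apply wedge_mem_rel_zero
    exact Or.inr (Or.inr (Or.inr (Or.inl ⟨c, q x, q y, rfl⟩)))
  · obtain ⟨x, x', y, rfl⟩ := h
    simp only [map_sub, map_add, key]
    rw [← map_sub, ← map_add]
    apply wedge_mem_rel_zero
    refine Or.inr (Or.inr (Or.inr (Or.inr (Or.inl ⟨q x, q x', q y, ?_⟩))))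
    simp [LieHom.map_lie]
  · obtain ⟨x, y, y', rfl⟩ := h
    simp only [map_sub, map_add, key]
    rw [← map_sub, ← map_add]
    apply wedge_mem_rel_zero
    refine Or.inr (Or.inr (Or.inr (Or.inr (Or.inr (Or.inl ⟨q x, q y, q y', ?_⟩)))))
    simp [LieHom.map_lie]
  · obtain ⟨x, y, x', y', rfl⟩ := h
    simp only [map_add, LieHom.map_lie, key]
    rw [← LieHom.map_lie, ← map_add]
    apply wedge_mem_rel_zero
    refine Or.inr (Or.inr (Or.inr (Or.inr (Or.inr (Or.inr (Or.inl
      ⟨q x, q y, q x', q y', ?_⟩))))))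
    simp [LieHom.map_lie]
  · obtain ⟨x, rfl⟩ := h
    rw [key]
    apply wedge_mem_rel_zero
    exact Or.inr (Or.inr (Or.inr (Or.inr (Or.inr (Or.inr (Or.inr ⟨q x, rfl⟩))))))

/-- The natural morphism `L ∧ L → (L/N) ∧ (L/N)` of exterior squares. -/
noncomputable def extSqMap (N : LieIdeal k L) :
    ExteriorSquare k L →ₗ⁅k⁆ ExteriorSquare k (L ⧸ N) :=
  lieQuotLift (exteriorIdeal k L) (extAux k L N) (extAux_rels k L N)

/-- The commutator morphism `L ∧ L → L`, `x ∧ y ↦ ⁅x, y⁆`. -/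
noncomputable def commutatorMap : ExteriorSquare k L →ₗ⁅k⁆ L :=
  lieQuotLift (exteriorIdeal k L) (FreeLieAlgebra.lift k fun p : L × L => ⁅p.1, p.2⁆)
    (by
      rw [exteriorIdeal, LieSubmodule.lieSpan_le]
      intro a ha
      rw [SetLike.mem_coe, LieHom.mem_ker]
      obtain h|h|h|h|h|h|h|h := ha
      · obtain ⟨x, x', y, rfl⟩ := h
        simp [FreeLieAlgebra.lift_of_apply, add_lie]
      · obtain ⟨x, y, y', rfl⟩ := h
        simp [FreeLieAlgebra.lift_of_apply, lie_add]
      · obtain ⟨c, x, y, rfl⟩ := h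
        simp [FreeLieAlgebra.lift_of_apply, smul_lie]
      · obtain ⟨c, x, y, rfl⟩ := h
        simp [FreeLieAlgebra.lift_of_apply, lie_smul]
      · obtain ⟨x, x', y, rfl⟩ := h
        simp only [map_sub, map_add, FreeLieAlgebra.lift_of_apply, lie_lie]
        abel
      · obtain ⟨x, y, y', rfl⟩ := h
        simp only [map_sub, map_add, FreeLieAlgebra.lift_of_apply, lie_lie]
        rw [leibniz_lie x y' y, ← lie_skew y ⁅x, y'⁆]
        abel
      · obtain ⟨x, y, x', y', rfl⟩ := h
        simp only [map_add, LieHom.map_lie, FreeLieAlgebra.lift_of_apply]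
        rw [← lie_skew y x]
        simp
      · obtain ⟨x, rfl⟩ := h
        simp [FreeLieAlgebra.lift_of_apply])

end extmaps

section more

variable (k : Type) [Field k]
variable (L : Type u) [LieRing L] [LieAlgebra k L]

/-- A Lie algebra is a Heisenberg algebra `H(m)` (of dimension `2m + 1`) iff its derived
subalgebra coincides with its centre and is one-dimensional, and it has dimension `2m + 1`. -/
def IsHeisenberg (m : ℕ) : Prop :=
  derived k L = LieAlgebra.center k L ∧ Module.finrank k L = 2 * m + 1 ∧
    Module.finrank k (derived k L) = 1

/-- A vector space regarded as an abelian Lie algebra. -/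
def AbelianLieOf (V : Type v) : Type v := V

instance (V : Type v) [AddCommGroup V] : AddCommGroup (AbelianLieOf V) :=
  inferInstanceAs (AddCommGroup V)

instance (V : Type v) [AddCommGroup V] [Module k V] : Module k (AbelianLieOf V) :=
  inferInstanceAs (Module k V)

instance (V : Type v) [AddCommGroup V] : LieRing (AbelianLieOf V) where
  bracket _ _ := 0
  add_lie _ _ _ := by simp
  lie_add _ _ _ := by simp
  lie_self _ := rfl
  leibniz_lie _ _ _ := by simp

instance (V : Type v) [AddCommGroup V] [Module k V] : LieAlgebra k (AbelianLieOf V) where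
  lie_smul _ _ _ := by
    show (0 : AbelianLieOf V) = _ • (0 : AbelianLieOf V)
    simp

/-- A decomposition of `L` as the direct sum of a Heisenberg algebra `H(m)` and an
abelian Lie algebra of dimension `j`. -/
structure HeisenbergAbelianDecomp (m j : ℕ) where
  H : Type u
  A : Type u
  [instHL : LieRing H]
  [instHA : LieAlgebra k H]
  [instAL : LieRing A]
  [instAA : LieAlgebra k A]
  heis : IsHeisenberg k H m
  abel : IsLieAbelian A
  dimA : Module.finrank k A = j
  equiv : Nonempty (L ≃ₗ⁅k⁆ H × A)

/-- The projection `H × A → H` as a Lie algebra morphism. -/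
def lieFst (H A : Type u) [LieRing H] [LieAlgebra k H] [LieRing A] [LieAlgebra k A] :
    H × A →ₗ⁅k⁆ H :=
  { toLinearMap := LinearMap.fst k H A
    map_lie' := rfl }

end more

/-! ### Auxiliary development for the exterior square of a Heisenberg algebra -/

section ESHAux

open TensorProduct

variable (k : Type) [Field k] (L : Type u) [LieRing L] [LieAlgebra k L]

/-- The relations cutting out the exterior square inside `L ⊗ L`. -/
def eshRels : Set (L ⊗[k] L) :=
  {t | ∃ x : L, t = x ⊗ₜ[k] x} ∪
  {t | ∃ u v w : L, t = ⁅u, v⁆ ⊗ₜ[k] w - u ⊗ₜ[k] ⁅v, w⁆ + v ⊗ₜ[k] ⁅u, w⁆}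

/-- The relation submodule. -/
def eshS : Submodule k (L ⊗[k] L) := Submodule.span k (eshRels k L)

variable {k L}

lemma eshS_self_mem (x : L) : x ⊗ₜ[k] x ∈ eshS k L :=
  Submodule.subset_span (Or.inl ⟨x, rfl⟩)

lemma eshS_gen5_mem (u v w : L) :
    ⁅u, v⁆ ⊗ₜ[k] w - u ⊗ₜ[k] ⁅v, w⁆ + v ⊗ₜ[k] ⁅u, w⁆ ∈ eshS k L :=
  Submodule.subset_span (Or.inr ⟨u, v, w, rfl⟩)

lemma sym_mem_span {S : Set (L ⊗[k] L)} (hS : {t | ∃ x : L, t = x ⊗ₜ[k] x} ⊆ S) (x y : L) :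
    x ⊗ₜ[k] y + y ⊗ₜ[k] x ∈ Submodule.span k S := by
  have h1 : (x + y) ⊗ₜ[k] (x + y) ∈ Submodule.span k S :=
    Submodule.subset_span (hS ⟨x + y, rfl⟩)
  have h2 : x ⊗ₜ[k] x ∈ Submodule.span k S := Submodule.subset_span (hS ⟨x, rfl⟩)
  have h3 : y ⊗ₜ[k] y ∈ Submodule.span k S := Submodule.subset_span (hS ⟨y, rfl⟩)
  have he : x ⊗ₜ[k] y + y ⊗ₜ[k] x
      = (x + y) ⊗ₜ[k] (x + y) - x ⊗ₜ[k] x - y ⊗ₜ[k] y := by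
    simp only [TensorProduct.add_tmul, TensorProduct.tmul_add]
    abel
  rw [he]
  exact sub_mem (sub_mem h1 h2) h3

lemma eshS_sym_mem (x y : L) : x ⊗ₜ[k] y + y ⊗ₜ[k] x ∈ eshS k L :=
  sym_mem_span (fun _ ht => Or.inl ht) x y

lemma eshS_central_mem {c : L} (hc : ∀ t : L, ⁅c, t⁆ = 0) (hc' : ∀ t : L, ⁅t, c⁆ = 0)
    (x y : L) : c ⊗ₜ[k] ⁅x, y⁆ ∈ eshS k L := by
  have h := eshS_gen5_mem (k := k) x c y
  rw [hc' x, hc y] at h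
  simpa using h

lemma eshS_rel6_mem (x y y' : L) :
    x ⊗ₜ[k] ⁅y, y'⁆ - ⁅y', x⁆ ⊗ₜ[k] y + ⁅y, x⁆ ⊗ₜ[k] y' ∈ eshS k L := by
  have hg := eshS_gen5_mem (k := k) y y' x
  have h1 := eshS_sym_mem (k := k) x ⁅y, y'⁆
  have h2 := eshS_sym_mem (k := k) ⁅y', x⁆ y
  have h3 := eshS_sym_mem (k := k) ⁅y, x⁆ y'
  have he : x ⊗ₜ[k] ⁅y, y'⁆ - ⁅y', x⁆ ⊗ₜ[k] y + ⁅y, x⁆ ⊗ₜ[k] y'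
      = ((x ⊗ₜ[k] ⁅y, y'⁆ + ⁅y, y'⁆ ⊗ₜ[k] x) - (⁅y', x⁆ ⊗ₜ[k] y + y ⊗ₜ[k] ⁅y', x⁆)
          + (⁅y, x⁆ ⊗ₜ[k] y' + y' ⊗ₜ[k] ⁅y, x⁆))
        - (⁅y, y'⁆ ⊗ₜ[k] x - y ⊗ₜ[k] ⁅y', x⁆ + y' ⊗ₜ[k] ⁅y, x⁆) := by abel
  rw [he]
  exact sub_mem (add_mem (sub_mem h1 h2) h3) hg

/-! #### Wedge identities in the exterior square -/

variable (k) in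
lemma wedge_eq_zero_of_rel {a : FreeLieAlgebra k (L × L)} (ha : a ∈ exteriorRels k L) :
    lieQuotMk k _ (exteriorIdeal k L) a = 0 :=
  wedge_mem_rel_zero k ha

lemma wedge_add_left (x x' y : L) :
    wedge k (x + x') y = wedge k x y + wedge k x' y := by
  have h := wedge_mem_rel_zero k (M := L) (Or.inl ⟨x, x', y, rfl⟩)
  rw [map_sub, map_sub] at h
  rw [sub_sub, sub_eq_zero] at h
  simpa [wedge_def] using h

lemma wedge_add_right (x y y' : L) :
    wedge k x (y + y') = wedge k x y + wedge k x y' := by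
  have h := wedge_mem_rel_zero k (M := L) (Or.inr (Or.inl ⟨x, y, y', rfl⟩))
  rw [map_sub, map_sub] at h
  rw [sub_sub, sub_eq_zero] at h
  simpa [wedge_def] using h

lemma wedge_smul_left (c : k) (x y : L) : wedge k (c • x) y = c • wedge k x y := by
  have h := wedge_mem_rel_zero k (M := L) (Or.inr (Or.inr (Or.inl ⟨c, x, y, rfl⟩)))
  rw [map_sub, map_smul] at h
  rw [sub_eq_zero] at h
  simpa [wedge_def] using h

lemma wedge_smul_right (c : k) (x y : L) : wedge k x (c • y) = c • wedge k x y := by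
  have h := wedge_mem_rel_zero k (M := L) (Or.inr (Or.inr (Or.inr (Or.inl ⟨c, x, y, rfl⟩))))
  rw [map_sub, map_smul] at h
  rw [sub_eq_zero] at h
  simpa [wedge_def] using h

lemma wedge_self (x : L) : wedge k x x = 0 := by
  have h := wedge_mem_rel_zero k (M := L)
    (Or.inr (Or.inr (Or.inr (Or.inr (Or.inr (Or.inr (Or.inr ⟨x, rfl⟩)))))))
  simpa [wedge_def] using h

lemma wedge_rel5 (x x' y : L) :
    wedge k ⁅x, x'⁆ y - wedge k x ⁅x', y⁆ + wedge k x' ⁅x, y⁆ = 0 := by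
  have h := wedge_mem_rel_zero k (M := L)
    (Or.inr (Or.inr (Or.inr (Or.inr (Or.inl ⟨x, x', y, rfl⟩)))))
  rw [map_add, map_sub] at h
  simpa [wedge_def] using h

lemma lie_wedge_wedge (x y x' y' : L) :
    ⁅wedge k x y, wedge k x' y'⁆ + wedge k ⁅y, x⁆ ⁅x', y'⁆ = 0 := by
  have h := wedge_mem_rel_zero k (M := L)
    (Or.inr (Or.inr (Or.inr (Or.inr (Or.inr (Or.inr (Or.inl ⟨x, y, x', y', rfl⟩)))))))
  rw [map_add, LieHom.map_lie] at h
  simpa [wedge_def] using h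

variable (k L) in
/-- The wedge as a bilinear map. -/
noncomputable def wedgeBil : L →ₗ[k] L →ₗ[k] ExteriorSquare k L :=
  LinearMap.mk₂ k (wedge k) wedge_add_left wedge_smul_left wedge_add_right wedge_smul_right

lemma wedge_zero_left (y : L) : wedge k (0 : L) y = 0 := by
  rw [show (0 : L) = (0 : k) • (0 : L) by rw [zero_smul], wedge_smul_left, zero_smul]

lemma wedge_zero_right (x : L) : wedge k x (0 : L) = 0 := by
  rw [show (0 : L) = (0 : k) • (0 : L) by rw [zero_smul], wedge_smul_right, zero_smul]

lemma wedge_central {c : L} (hc : ∀ t : L, ⁅c, t⁆ = 0) (hc' : ∀ t : L, ⁅t, c⁆ = 0)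
    (x y : L) : wedge k c ⁅x, y⁆ = 0 := by
  have h := wedge_rel5 (k := k) x c y
  rw [hc' x, hc y, wedge_zero_left, wedge_zero_right] at h
  simpa using h

/-! #### The maps between the exterior square and `(L ⊗ L) ⧸ S` -/

variable (k L) in
/-- The lift of `(x, y) ↦ [x ⊗ y]` to the free Lie algebra, valued in the
abelianization model. -/
noncomputable def eshF0 :
    FreeLieAlgebra k (L × L) →ₗ⁅k⁆ AbelianLieOf ((L ⊗[k] L) ⧸ eshS k L) :=
  FreeLieAlgebra.lift k fun p =>
    ((eshS k L).mkQ (p.1 ⊗ₜ[k] p.2) : AbelianLieOf ((L ⊗[k] L) ⧸ eshS k L))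

lemma eshF0_of (x y : L) :
    eshF0 k L (FreeLieAlgebra.of k (x, y)) = (eshS k L).mkQ (x ⊗ₜ[k] y) := by
  exact FreeLieAlgebra.lift_of_apply (R := k) _ _

lemma abelianLieOf_lie {V : Type v} [AddCommGroup V] (a b : AbelianLieOf V) :
    ⁅a, b⁆ = 0 := rfl

lemma mkQ_eshS_eq_zero {t : L ⊗[k] L} (ht : t ∈ eshS k L) : (eshS k L).mkQ t = 0 := by
  rwa [Submodule.mkQ_apply, Submodule.Quotient.mk_eq_zero]

lemma eshF0_ker (hcent : ∀ x y t : L, ⁅⁅x, y⁆, t⁆ = 0) :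
    exteriorIdeal k L ≤ (eshF0 k L).ker := by
  rw [exteriorIdeal, LieSubmodule.lieSpan_le]
  intro a ha
  rw [SetLike.mem_coe, LieHom.mem_ker]
  obtain h | h | h | h | h | h | h | h := ha
  · obtain ⟨x, x', y, rfl⟩ := h
    rw [map_sub, map_sub, eshF0_of, eshF0_of, eshF0_of]
    rw [TensorProduct.add_tmul, map_add]
    show (eshS k L).mkQ (x ⊗ₜ[k] y) + (eshS k L).mkQ (x' ⊗ₜ[k] y)
      - (eshS k L).mkQ (x ⊗ₜ[k] y) - (eshS k L).mkQ (x' ⊗ₜ[k] y) = (0 : (L ⊗[k] L) ⧸ eshS k L)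
    abel
  · obtain ⟨x, y, y', rfl⟩ := h
    rw [map_sub, map_sub, eshF0_of, eshF0_of, eshF0_of]
    rw [TensorProduct.tmul_add, map_add]
    show (eshS k L).mkQ (x ⊗ₜ[k] y) + (eshS k L).mkQ (x ⊗ₜ[k] y')
      - (eshS k L).mkQ (x ⊗ₜ[k] y) - (eshS k L).mkQ (x ⊗ₜ[k] y') = (0 : (L ⊗[k] L) ⧸ eshS k L)
    abel
  · obtain ⟨c, x, y, rfl⟩ := h
    rw [map_sub, map_smul, eshF0_of, eshF0_of]
    rw [← TensorProduct.smul_tmul', map_smul]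
    exact sub_self _
  · obtain ⟨c, x, y, rfl⟩ := h
    rw [map_sub, map_smul, eshF0_of, eshF0_of]
    rw [TensorProduct.tmul_smul, map_smul]
    exact sub_self _
  · obtain ⟨x, x', y, rfl⟩ := h
    rw [map_add, map_sub, eshF0_of, eshF0_of, eshF0_of]
    show (eshS k L).mkQ (⁅x, x'⁆ ⊗ₜ[k] y) - (eshS k L).mkQ (x ⊗ₜ[k] ⁅x', y⁆)
      + (eshS k L).mkQ (x' ⊗ₜ[k] ⁅x, y⁆) = (0 : (L ⊗[k] L) ⧸ eshS k L)
    rw [← map_sub, ← map_add]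
    exact mkQ_eshS_eq_zero (eshS_gen5_mem x x' y)
  · obtain ⟨x, y, y', rfl⟩ := h
    rw [map_add, map_sub, eshF0_of, eshF0_of, eshF0_of]
    show (eshS k L).mkQ (x ⊗ₜ[k] ⁅y, y'⁆) - (eshS k L).mkQ (⁅y', x⁆ ⊗ₜ[k] y)
      + (eshS k L).mkQ (⁅y, x⁆ ⊗ₜ[k] y') = (0 : (L ⊗[k] L) ⧸ eshS k L)
    rw [← map_sub, ← map_add]
    exact mkQ_eshS_eq_zero (eshS_rel6_mem x y y')
  · obtain ⟨x, y, x', y', rfl⟩ := h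
    rw [map_add, LieHom.map_lie, abelianLieOf_lie, zero_add, eshF0_of]
    exact mkQ_eshS_eq_zero (eshS_central_mem (hcent y x)
      (fun t => by rw [← lie_skew, hcent y x t, neg_zero]) x' y')
  · obtain ⟨x, rfl⟩ := h
    rw [eshF0_of]
    exact mkQ_eshS_eq_zero (eshS_self_mem x)

variable (k L) in
/-- The morphism `L ∧ L → (L ⊗ L) ⧸ S` (as a Lie morphism to the abelianized target). -/
noncomputable def eshPhi (hcent : ∀ x y t : L, ⁅⁅x, y⁆, t⁆ = 0) :
    ExteriorSquare k L →ₗ⁅k⁆ AbelianLieOf ((L ⊗[k] L) ⧸ eshS k L) :=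
  lieQuotLift (exteriorIdeal k L) (eshF0 k L) (eshF0_ker hcent)

variable (k L) in
/-- The identity, from the abelianization back to the module. -/
def unAb {V : Type v} [AddCommGroup V] [Module k V] : AbelianLieOf V →ₗ[k] V where
  toFun x := x
  map_add' _ _ := rfl
  map_smul' _ _ := rfl

variable (k L) in
/-- The map `(L ⊗ L) ⧸ S → L ∧ L`. -/
noncomputable def eshPsi : ((L ⊗[k] L) ⧸ eshS k L) →ₗ[k] ExteriorSquare k L :=
  Submodule.liftQ _ (TensorProduct.lift (wedgeBil k L)) (by
    rw [eshS, Submodule.span_le]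
    rintro t (⟨x, rfl⟩ | ⟨u, v, w, rfl⟩) <;>
      simp only [SetLike.mem_coe, LinearMap.mem_ker, map_sub, map_add,
        TensorProduct.lift.tmul]
    · exact wedge_self x
    · exact wedge_rel5 u v w)

lemma eshPsi_mkQ (x y : L) :
    eshPsi k L ((eshS k L).mkQ (x ⊗ₜ[k] y)) = wedge k x y := by
  rw [eshPsi, Submodule.mkQ_apply, Submodule.liftQ_apply, TensorProduct.lift.tmul]
  rfl

lemma eshPhi_wedge (hcent : ∀ x y t : L, ⁅⁅x, y⁆, t⁆ = 0) (x y : L) :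
    eshPhi k L hcent (wedge k x y) = (eshS k L).mkQ (x ⊗ₜ[k] y) := by
  rw [wedge_def, eshPhi, lieQuotLift_mk, eshF0_of]

lemma eshPhi_psi (hcent : ∀ x y t : L, ⁅⁅x, y⁆, t⁆ = 0)
    (t : (L ⊗[k] L) ⧸ eshS k L) :
    unAb k (eshPhi k L hcent (eshPsi k L t)) = t := by
  obtain ⟨s, rfl⟩ := Submodule.Quotient.mk_surjective _ t
  rw [← Submodule.mkQ_apply]
  induction s using TensorProduct.induction_on with
  | zero => simp
  | tmul x y => rw [eshPsi_mkQ, eshPhi_wedge]; rfl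
  | add s₁ s₂ h1 h2 =>
    rw [map_add, map_add, map_add, map_add, h1, h2]

variable (k L) in
lemma eshWedge_span :
    Submodule.span k {e : ExteriorSquare k L | ∃ x y : L, e = wedge k x y} = ⊤ := by
  set MW := Submodule.span k {e : ExteriorSquare k L | ∃ x y : L, e = wedge k x y} with hMW
  have htriv : ∀ a ∈ MW, ∀ b ∈ MW, ⁅a, b⁆ ∈ MW := by
    intro a ha b hb
    induction ha using Submodule.span_induction with
    | mem a' ha' =>
      induction hb using Submodule.span_induction with
      | mem b' hb' =>
        obtain ⟨x, y, rfl⟩ := ha'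
        obtain ⟨x', y', rfl⟩ := hb'
        have h := lie_wedge_wedge (k := k) x y x' y'
        rw [eq_neg_of_add_eq_zero_left h]
        exact neg_mem (Submodule.subset_span ⟨_, _, rfl⟩)
      | zero => rw [lie_zero]; exact zero_mem _
      | add b₁ b₂ _ _ h1 h2 => rw [lie_add]; exact add_mem h1 h2
      | smul c b' _ h1 => rw [lie_smul]; exact Submodule.smul_mem _ c h1
    | zero => rw [zero_lie]; exact zero_mem _
    | add a₁ a₂ _ _ h1 h2 => rw [add_lie]; exact add_mem h1 h2
    | smul c a' _ h1 => rw [smul_lie]; exact Submodule.smul_mem _ c h1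
  have hK : ∃ K : LieSubalgebra k (ExteriorSquare k L), K.toSubmodule = MW := by
    exact ⟨{ MW with lie_mem' := fun {x y} hx hy => htriv x hx y hy }, rfl⟩
  obtain ⟨K, hKeq⟩ := hK
  rw [eq_top_iff]
  intro e _
  have hsurj : ∃ a : FreeLieAlgebra k (L × L), lieQuotMk k _ (exteriorIdeal k L) a = e :=
    Submodule.Quotient.mk_surjective _ e
  obtain ⟨a, rfl⟩ := hsurj
  have hg : ∀ p : L × L, wedge k p.1 p.2 ∈ K := by
    intro p
    rw [← LieSubalgebra.mem_toSubmodule, hKeq]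
    exact Submodule.subset_span ⟨p.1, p.2, rfl⟩
  set g : FreeLieAlgebra k (L × L) →ₗ⁅k⁆ K :=
    FreeLieAlgebra.lift k fun p => (⟨wedge k p.1 p.2, hg p⟩ : K) with hgdef
  have hcomp : K.incl.comp g = lieQuotMk k _ (exteriorIdeal k L) := by
    apply (FreeLieAlgebra.lift k).symm.injective
    rw [FreeLieAlgebra.lift_symm_apply, FreeLieAlgebra.lift_symm_apply]
    funext p
    rw [Function.comp_apply, Function.comp_apply, LieHom.comp_apply, hgdef,
      FreeLieAlgebra.lift_of_apply]
    exact (wedge_def k L p.1 p.2).symm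
  have : lieQuotMk k _ (exteriorIdeal k L) a = K.incl (g a) := by rw [← hcomp]; rfl
  rw [this, ← hKeq]
  exact (LieSubalgebra.mem_toSubmodule K).mpr (g a).2

lemma esh_lie_trivial (hcent : ∀ x y t : L, ⁅⁅x, y⁆, t⁆ = 0)
    (a b : ExteriorSquare k L) : ⁅a, b⁆ = 0 := by
  have ha : a ∈ Submodule.span k {e : ExteriorSquare k L | ∃ x y : L, e = wedge k x y} := by
    rw [eshWedge_span]; exact Submodule.mem_top
  have hb : b ∈ Submodule.span k {e : ExteriorSquare k L | ∃ x y : L, e = wedge k x y} := by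
    rw [eshWedge_span]; exact Submodule.mem_top
  induction ha using Submodule.span_induction with
  | mem a' ha' =>
    induction hb using Submodule.span_induction with
    | mem b' hb' =>
      obtain ⟨x, y, rfl⟩ := ha'
      obtain ⟨x', y', rfl⟩ := hb'
      have h := lie_wedge_wedge (k := k) x y x' y'
      have hc : wedge k ⁅y, x⁆ ⁅x', y'⁆ = 0 :=
        wedge_central (hcent y x) (fun t => by rw [← lie_skew, hcent y x t, neg_zero]) x' y'
      rw [hc, add_zero] at h
      exact h
    | zero => rw [lie_zero]
    | add b₁ b₂ _ _ h1 h2 => rw [lie_add, h1, h2, add_zero]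
    | smul c b' _ h1 => rw [lie_smul, h1, smul_zero]
  | zero => rw [zero_lie]
  | add a₁ a₂ _ _ h1 h2 => rw [add_lie, h1, h2, add_zero]
  | smul c a' _ h1 => rw [smul_lie, h1, smul_zero]

lemma eshPsi_bijective (hcent : ∀ x y t : L, ⁅⁅x, y⁆, t⁆ = 0) :
    Function.Bijective (eshPsi k L) := by
  constructor
  · intro t₁ t₂ h
    have := eshPhi_psi hcent t₁
    rw [h, eshPhi_psi hcent t₂] at this
    exact this.symm
  · intro e
    have he : e ∈ LinearMap.range (eshPsi k L) := by
      have : Submodule.span k {e : ExteriorSquare k L | ∃ x y : L, e = wedge k x y} ≤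
          LinearMap.range (eshPsi k L) := by
        rw [Submodule.span_le]
        rintro _ ⟨x, y, rfl⟩
        exact ⟨(eshS k L).mkQ (x ⊗ₜ[k] y), eshPsi_mkQ x y⟩
      apply this
      rw [eshWedge_span]
      exact Submodule.mem_top
    exact he

/-! #### Coordinate computations -/

/-- Index type for strictly increasing pairs in `Fin M`. -/
abbrev EshPair (M : ℕ) := (j : Fin M) × Fin j.val

/-- The smaller member of the pair, as an element of `Fin M`. -/
def eshPairFst {M : ℕ} (p : EshPair M) : Fin M := Fin.castLE p.1.isLt.le p.2

lemma eshPairFst_lt {M : ℕ} (p : EshPair M) : eshPairFst p < p.1 := p.2.isLt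

variable {N : ℕ} (b : Basis (Fin N) k L) {M : ℕ} (σ : Fin M → Fin N)

/-- The antisymmetrized coordinate map on `L ⊗ L` in the coordinates `σ`. -/
noncomputable def eshTheta : L ⊗[k] L →ₗ[k] (EshPair M → k) :=
  TensorProduct.lift (LinearMap.mk₂ k
    (fun x y p => b.repr x (σ (eshPairFst p)) * b.repr y (σ p.1)
      - b.repr x (σ p.1) * b.repr y (σ (eshPairFst p)))
    (fun x x' y => by funext p; simp only [map_add, Finsupp.add_apply, Pi.add_apply]; ring)
    (fun c x y => by
      funext p
      simp only [map_smul, Finsupp.smul_apply, Pi.smul_apply, smul_eq_mul]; ring)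
    (fun x y y' => by funext p; simp only [map_add, Finsupp.add_apply, Pi.add_apply]; ring)
    (fun c x y => by
      funext p
      simp only [map_smul, Finsupp.smul_apply, Pi.smul_apply, smul_eq_mul]; ring))

lemma eshTheta_tmul (x y : L) (p : EshPair M) :
    eshTheta b σ (x ⊗ₜ[k] y) p = b.repr x (σ (eshPairFst p)) * b.repr y (σ p.1)
      - b.repr x (σ p.1) * b.repr y (σ (eshPairFst p)) := by
  rw [eshTheta, TensorProduct.lift.tmul]
  rfl

lemma eshTheta_tmul_self (x : L) : eshTheta b σ (x ⊗ₜ[k] x) = 0 := by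
  funext p
  rw [eshTheta_tmul, Pi.zero_apply]
  ring

lemma eshTheta_tmul_basis_left {j : Fin N} (hj : j ∉ Set.range σ) (y : L) :
    eshTheta b σ (b j ⊗ₜ[k] y) = 0 := by
  funext p
  rw [eshTheta_tmul, b.repr_self, Finsupp.single_apply, Finsupp.single_apply,
    if_neg (fun h => hj ⟨_, h.symm⟩), if_neg (fun h => hj ⟨_, h.symm⟩), Pi.zero_apply]
  ring

lemma eshTheta_tmul_basis_right {j : Fin N} (hj : j ∉ Set.range σ) (y : L) :
    eshTheta b σ (y ⊗ₜ[k] b j) = 0 := by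
  funext p
  rw [eshTheta_tmul, b.repr_self, Finsupp.single_apply, Finsupp.single_apply,
    if_neg (fun h => hj ⟨_, h.symm⟩), if_neg (fun h => hj ⟨_, h.symm⟩), Pi.zero_apply]
  ring

lemma eshTheta_tmul_basis_basis (u v : Fin N) (p : EshPair M) :
    eshTheta b σ (b u ⊗ₜ[k] b v) p
      = (if u = σ (eshPairFst p) then (1 : k) else 0) * (if v = σ p.1 then 1 else 0)
        - (if u = σ p.1 then (1 : k) else 0) * (if v = σ (eshPairFst p) then 1 else 0) := by
  rw [eshTheta_tmul, b.repr_self, b.repr_self, Finsupp.single_apply, Finsupp.single_apply,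
    Finsupp.single_apply, Finsupp.single_apply]

lemma eshPair_eq_of {M : ℕ} {p q : EshPair M} (h1 : p.1 = q.1)
    (h2 : eshPairFst p = eshPairFst q) : p = q := by
  obtain ⟨p1, p2⟩ := p
  obtain ⟨q1, q2⟩ := q
  cases h1
  congr 1
  apply Fin.ext
  have h3 : ((Fin.castLE p1.isLt.le p2 : Fin M) : ℕ) = ((Fin.castLE p1.isLt.le q2 : Fin M) : ℕ) :=
    congrArg Fin.val h2
  simpa using h3

/-- The kernel of the antisymmetrized coordinate map. -/
lemma eshTheta_ker (hσ : StrictMono σ) :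
    LinearMap.ker (eshTheta b σ) = Submodule.span k
      ({t | ∃ x : L, t = x ⊗ₜ[k] x} ∪
        {t | ∃ (j : Fin N) (y : L), j ∉ Set.range σ ∧
          (t = b j ⊗ₜ[k] y ∨ t = y ⊗ₜ[k] b j)}) := by
  apply le_antisymm
  · intro t ht
    have ht0 : eshTheta b σ t = 0 := ht
    set a : Fin N × Fin N → k := fun pq => (Basis.tensorProduct b b).repr t pq with ha
    have hrep : t = ∑ pq : Fin N × Fin N, a pq • (b pq.1 ⊗ₜ[k] b pq.2) := by
      have hh := (Basis.tensorProduct b b).sum_repr t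
      rw [← hh]
      apply Finset.sum_congr rfl
      intro pq _
      rw [Basis.tensorProduct_apply']
    have hsym : ∀ i j : Fin M, i < j → a (σ i, σ j) = a (σ j, σ i) := by
      intro i j hij
      have hij' : (i : ℕ) < (j : ℕ) := hij
      set q : EshPair M := ⟨j, ⟨(i : ℕ), hij'⟩⟩ with hq
      have hfst : eshPairFst q = i := Fin.ext rfl
      have hcomp : eshTheta b σ t q = a (σ i, σ j) - a (σ j, σ i) := by
        conv_lhs => rw [hrep]
        rw [map_sum, Finset.sum_apply]
        have step : ∀ pq : Fin N × Fin N,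
            eshTheta b σ (a pq • (b pq.1 ⊗ₜ[k] b pq.2)) q
              = (if pq = (σ i, σ j) then a pq else 0)
                - (if pq = (σ j, σ i) then a pq else 0) := by
          intro pq
          rw [map_smul, Pi.smul_apply, eshTheta_tmul_basis_basis, hfst]
          have hne : σ i ≠ σ j := ne_of_lt (hσ hij)
          by_cases c1 : pq.1 = σ i <;> by_cases c2 : pq.2 = σ j <;>
            by_cases c3 : pq.1 = σ j <;> by_cases c4 : pq.2 = σ i <;>
            simp [Prod.ext_iff, c1, c2, c3, c4, hne, hne.symm, smul_eq_mul, q]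
        rw [Finset.sum_congr rfl fun pq _ => step pq, Finset.sum_sub_distrib,
          Finset.sum_ite_eq' Finset.univ ((σ i, σ j)) a,
          Finset.sum_ite_eq' Finset.univ ((σ j, σ i)) a,
          if_pos (Finset.mem_univ _), if_pos (Finset.mem_univ _)]
      rw [ht0, Pi.zero_apply] at hcomp
      exact (sub_eq_zero.mp hcomp.symm)
    set G : Set (L ⊗[k] L) :=
      {t | ∃ x : L, t = x ⊗ₜ[k] x} ∪
        {t | ∃ (j : Fin N) (y : L), j ∉ Set.range σ ∧
          (t = b j ⊗ₜ[k] y ∨ t = y ⊗ₜ[k] b j)} with hG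
    set f : Fin N × Fin N → L ⊗[k] L := fun pq => a pq • (b pq.1 ⊗ₜ[k] b pq.2) with hfdef
    have hsum1 : ∑ pq : Fin N × Fin N, f pq
        = (∑ pq ∈ Finset.univ.filter (fun pq : Fin N × Fin N => pq.1 < pq.2), f pq)
          + ∑ pq ∈ Finset.univ.filter (fun pq : Fin N × Fin N => ¬pq.1 < pq.2), f pq :=
      (Finset.sum_filter_add_sum_filter_not _ _ _).symm
    have hflt : (Finset.univ.filter (fun pq : Fin N × Fin N => ¬pq.1 < pq.2)).filter
        (fun pq : Fin N × Fin N => pq.2 < pq.1)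
        = Finset.univ.filter (fun pq : Fin N × Fin N => pq.2 < pq.1) := by
      ext pq
      simp only [Finset.mem_filter, Finset.mem_univ, true_and]
      exact ⟨fun h => h.2, fun h => ⟨lt_asymm h, h⟩⟩
    have hfeq : (Finset.univ.filter (fun pq : Fin N × Fin N => ¬pq.1 < pq.2)).filter
        (fun pq : Fin N × Fin N => ¬pq.2 < pq.1)
        = Finset.univ.filter (fun pq : Fin N × Fin N => pq.1 = pq.2) := by
      ext pq
      simp only [Finset.mem_filter, Finset.mem_univ, true_and]
      constructor
      · rintro ⟨h1, h2⟩
        exact le_antisymm (not_lt.mp h2) (not_lt.mp h1)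
      · intro h
        exact ⟨by rw [h]; exact lt_irrefl _, by rw [h]; exact lt_irrefl _⟩
    have hsum2 : ∑ pq ∈ Finset.univ.filter (fun pq : Fin N × Fin N => ¬pq.1 < pq.2), f pq
        = (∑ pq ∈ Finset.univ.filter (fun pq : Fin N × Fin N => pq.2 < pq.1), f pq)
          + ∑ pq ∈ Finset.univ.filter (fun pq : Fin N × Fin N => pq.1 = pq.2), f pq := by
      rw [← hflt, ← hfeq]
      exact (Finset.sum_filter_add_sum_filter_not _ _ _).symm
    have hsum3 : ∑ pq ∈ Finset.univ.filter (fun pq : Fin N × Fin N => pq.2 < pq.1), f pq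
        = ∑ pq ∈ Finset.univ.filter (fun pq : Fin N × Fin N => pq.1 < pq.2), f pq.swap := by
      apply Finset.sum_equiv (Equiv.prodComm (Fin N) (Fin N))
      · intro pq
        simp [Finset.mem_filter]
      · intro pq _
        rfl
    have hfinal : t = ∑ pq ∈ Finset.univ.filter (fun pq : Fin N × Fin N => pq.1 < pq.2),
          (f pq + f pq.swap)
        + ∑ pq ∈ Finset.univ.filter (fun pq : Fin N × Fin N => pq.1 = pq.2), f pq := by
      rw [Finset.sum_add_distrib, ← hsum3, add_assoc, ← hsum2, ← hsum1, hrep]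
    rw [hfinal]
    apply Submodule.add_mem
    · apply Submodule.sum_mem
      intro pq hpq
      rw [Finset.mem_filter] at hpq
      obtain ⟨-, hlt⟩ := hpq
      by_cases hr1 : pq.1 ∈ Set.range σ
      · by_cases hr2 : pq.2 ∈ Set.range σ
        · obtain ⟨i, hi⟩ := hr1
          obtain ⟨j, hj⟩ := hr2
          have hij : i < j := by
            rw [← hσ.lt_iff_lt, hi, hj]
            exact hlt
          have hkey : a pq.swap = a pq := by
            have h1 : pq = (σ i, σ j) := by
              rw [Prod.ext_iff]
              exact ⟨hi.symm, hj.symm⟩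
            rw [h1]
            exact (hsym i j hij).symm
          rw [hfdef]
          simp only
          rw [hkey]
          have : a pq • (b pq.1 ⊗ₜ[k] b pq.2) + a pq • (b pq.swap.1 ⊗ₜ[k] b pq.swap.2)
              = a pq • (b pq.1 ⊗ₜ[k] b pq.2 + b pq.2 ⊗ₜ[k] b pq.1) := by
            rw [smul_add]
            rfl
          rw [this]
          exact Submodule.smul_mem _ _ (sym_mem_span (fun _ ht => Or.inl ht) _ _)
        · apply Submodule.add_mem
          · exact Submodule.smul_mem _ _
              (Submodule.subset_span (Or.inr ⟨pq.2, b pq.1, hr2, Or.inr rfl⟩))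
          · exact Submodule.smul_mem _ _
              (Submodule.subset_span (Or.inr ⟨pq.2, b pq.1, hr2, Or.inl rfl⟩))
      · apply Submodule.add_mem
        · exact Submodule.smul_mem _ _
            (Submodule.subset_span (Or.inr ⟨pq.1, b pq.2, hr1, Or.inl rfl⟩))
        · exact Submodule.smul_mem _ _
            (Submodule.subset_span (Or.inr ⟨pq.1, b pq.2, hr1, Or.inr rfl⟩))
    · apply Submodule.sum_mem
      intro pq hpq
      rw [Finset.mem_filter] at hpq
      obtain ⟨-, heq⟩ := hpq
      apply Submodule.smul_mem
      apply Submodule.subset_span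
      exact Or.inl ⟨b pq.1, by rw [← heq]⟩
  · rw [Submodule.span_le]
    rintro t (⟨x, rfl⟩ | ⟨j, y, hj, (rfl | rfl)⟩) <;> rw [SetLike.mem_coe, LinearMap.mem_ker]
    · exact eshTheta_tmul_self b σ x
    · exact eshTheta_tmul_basis_left b σ hj y
    · exact eshTheta_tmul_basis_right b σ hj y

lemma eshTheta_surjective (hσ : StrictMono σ) : Function.Surjective (eshTheta b σ) := by
  rw [← LinearMap.range_eq_top]
  rw [eq_top_iff]
  intro f _
  have hf : f = ∑ p : EshPair M, f p • (Pi.single p 1 : EshPair M → k) := by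
    funext q
    rw [Finset.sum_apply]
    rw [Finset.sum_eq_single q]
    · simp
    · intro p _ hpq
      simp [Pi.single_apply, hpq]
    · intro h; exact absurd (Finset.mem_univ q) h
  rw [hf]
  apply Submodule.sum_mem
  intro p _
  apply Submodule.smul_mem
  refine ⟨b (σ (eshPairFst p)) ⊗ₜ[k] b (σ p.1), ?_⟩
  funext q
  rw [eshTheta_tmul_basis_basis]
  by_cases hq : q = p
  · subst hq
    have hne : σ (eshPairFst q) ≠ σ q.1 :=
      fun h => absurd (hσ.injective h) (ne_of_lt (eshPairFst_lt q))
    rw [if_pos rfl, if_pos rfl, if_neg hne, Pi.single_eq_same, one_mul, zero_mul, sub_zero]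
  · rw [Pi.single_apply, if_neg hq]
    have key1 : ((if σ (eshPairFst p) = σ (eshPairFst q) then (1 : k) else 0)
        * (if σ p.1 = σ q.1 then (1 : k) else 0)) = 0 := by
      by_cases c1 : σ (eshPairFst p) = σ (eshPairFst q)
      · by_cases c2 : σ p.1 = σ q.1
        · exact absurd (eshPair_eq_of (hσ.injective c2) (hσ.injective c1)).symm hq
        · rw [if_neg c2, mul_zero]
      · rw [if_neg c1, zero_mul]
    have key2 : ((if σ (eshPairFst p) = σ q.1 then (1 : k) else 0)
        * (if σ p.1 = σ (eshPairFst q) then (1 : k) else 0)) = 0 := by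
      by_cases c3 : σ (eshPairFst p) = σ q.1
      · by_cases c4 : σ p.1 = σ (eshPairFst q)
        · exfalso
          have e3 := hσ.injective c3
          have e4 := hσ.injective c4
          have l1 := eshPairFst_lt p
          have l2 := eshPairFst_lt q
          rw [e3] at l1
          rw [e4] at l1
          exact lt_irrefl _ (lt_trans l1 l2)
        · rw [if_neg c4, mul_zero]
      · rw [if_neg c3, zero_mul]
    rw [key1, key2, sub_zero]

lemma eshPair_card (M : ℕ) : Fintype.card (EshPair M) = M * (M - 1) / 2 := by
  rw [Fintype.card_sigma]
  simp only [Fintype.card_fin]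
  rw [Fin.sum_univ_eq_sum_range (fun i => i) M, Finset.sum_range_id]

end ESHAux

open scoped TensorProduct

/-- `H(1) ∧ H(1) ≅ A(3)` and `H(m) ∧ H(m) ≅ A(2m² - m)` for `m ≥ 2`:
the exterior square of a Heisenberg algebra is abelian, of dimension `3` when `m = 1` and
`2m² - m` when `m ≥ 2`. -/
theorem exterior_square_heisenberg (k : Type) [Field k] (L : Type u) [LieRing L]
    [LieAlgebra k L] [Module.Finite k L] (m : ℕ) (hm : 1 ≤ m) (hL : IsHeisenberg k L m) :
    IsLieAbelian (ExteriorSquare k L) ∧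
    (m = 1 → Module.finrank k (ExteriorSquare k L) = 3) ∧
    (2 ≤ m → Module.finrank k (ExteriorSquare k L) = 2 * m ^ 2 - m) := by
  classical
  obtain ⟨hZc, hdim, hZ1⟩ := hL
  have hbrmem : ∀ x y : L, ⁅x, y⁆ ∈ derived k L := fun x y =>
    LieSubmodule.lie_mem_lie (LieSubmodule.mem_top x) (LieSubmodule.mem_top y)
  have hcent0 : ∀ w : L, w ∈ derived k L → ∀ t : L, ⁅t, w⁆ = 0 := by
    intro w hw t
    rw [hZc] at hw
    exact (LieModule.mem_maxTrivSubmodule k L L w).mp hw t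
  have hcent0' : ∀ w : L, w ∈ derived k L → ∀ t : L, ⁅w, t⁆ = 0 := by
    intro w hw t
    rw [← lie_skew, hcent0 w hw t, neg_zero]
  have hcent : ∀ x y t : L, ⁅⁅x, y⁆, t⁆ = 0 := fun x y t =>
    hcent0' ⁅x, y⁆ (hbrmem x y) t
  have habel : IsLieAbelian (ExteriorSquare k L) := ⟨fun a b => esh_lie_trivial hcent a b⟩
  -- a generator of the derived algebra
  have hfd : FiniteDimensional k L := inferInstance
  have hnt : Nontrivial (derived k L) := by
    apply Module.nontrivial_of_finrank_pos (R := k)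
    rw [hZ1]
    norm_num
  obtain ⟨⟨z, hz⟩, hz0'⟩ := exists_ne (0 : derived k L)
  have hz0 : z ≠ 0 := by
    intro h
    apply hz0'
    exact Subtype.ext h
  have hspanZ : Submodule.span k {z} = (derived k L).toSubmodule := by
    apply Submodule.eq_of_le_of_finrank_le
    · rw [Submodule.span_le, Set.singleton_subset_iff]
      exact hz
    · rw [finrank_span_singleton hz0]
      exact le_of_eq hZ1
  have hzl : ∀ t : L, ⁅z, t⁆ = 0 := hcent0' z hz
  have hzr : ∀ t : L, ⁅t, z⁆ = 0 := hcent0 z hz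
  -- an adapted basis
  obtain ⟨U, hU⟩ := Submodule.exists_isCompl (Submodule.span k {z})
  have hWdim : finrank k (Submodule.span k {z}) = 1 := finrank_span_singleton hz0
  have hUdim : finrank k U = 2 * m := by
    have h := Submodule.finrank_add_eq_of_isCompl hU
    rw [hWdim, hdim] at h
    omega
  have hli : LinearIndependent k (fun _ : Fin 1 => z) := linearIndependent_unique_iff.mpr hz0
  have hrange : Submodule.span k (Set.range fun _ : Fin 1 => z) = Submodule.span k {z} := by
    rw [Set.range_const]
  let bW : Basis (Fin 1) k (Submodule.span k {z}) :=
    (Basis.span hli).map (LinearEquiv.ofEq _ _ hrange)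
  let bU : Basis (Fin (2 * m)) k U := (Module.finBasis k U).reindex (finCongr hUdim)
  let eIdx : (Fin 1 ⊕ Fin (2 * m)) ≃ Fin (2 * m + 1) :=
    finSumFinEquiv.trans (finCongr (by omega))
  let b : Basis (Fin (2 * m + 1)) k L :=
    (((bW.prod bU).map (Submodule.prodEquivOfIsCompl _ U hU)).reindex eIdx)
  have hb0 : b 0 = z := by
    have he : eIdx (Sum.inl 0) = 0 := by
      apply Fin.ext
      simp [eIdx, finSumFinEquiv_apply_left]
    have he' : eIdx.symm 0 = Sum.inl 0 := by
      rw [← he, Equiv.symm_apply_apply]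
    rw [Module.Basis.reindex_apply, he', Basis.map_apply, Basis.prod_apply]
    simp only [Sum.elim_inl, Function.comp_apply]
    rw [Submodule.coe_prodEquivOfIsCompl']
    simp only [LinearMap.coe_inl]
    show (↑(bW 0) : L) + ↑(0 : U) = z
    rw [Submodule.coe_zero, add_zero]
    show ((LinearEquiv.ofEq _ _ hrange) (Basis.span hli 0) : L) = z
    have : ((LinearEquiv.ofEq _ _ hrange) (Basis.span hli 0) : L) = ((Basis.span hli 0 : _) : L) :=
      rfl
    rw [this, Basis.span_apply]
  have hreprz : b.repr z = Finsupp.single 0 1 := by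
    rw [← hb0, Basis.repr_self]
  have hkey : ∀ x y : L, ⁅x, y⁆ = ((b.coord 0) ⁅x, y⁆) • z := by
    intro x y
    have h1 : ⁅x, y⁆ ∈ Submodule.span k {z} := by
      rw [hspanZ]
      exact hbrmem x y
    obtain ⟨c, hc⟩ := Submodule.mem_span_singleton.mp h1
    have hcoord : (b.coord 0) ⁅x, y⁆ = c := by
      rw [← hc, map_smul, smul_eq_mul, Basis.coord_apply, hreprz, Finsupp.single_eq_same,
        mul_one]
    rw [hcoord, ← hc]
  -- the dimension of the exterior square equals that of `(L ⊗ L) ⧸ S`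
  have hEq : Module.finrank k (ExteriorSquare k L)
      = Module.finrank k ((L ⊗[k] L) ⧸ eshS k L) :=
    (LinearEquiv.ofBijective (eshPsi k L) (eshPsi_bijective hcent)).symm.finrank_eq
  refine ⟨habel, ?_, ?_⟩
  · -- the case m = 1
    intro hm1
    subst hm1
    let b' : Basis (Fin 3) k L := b
    have hb0' : b' 0 = z := hb0
    have hkey' : ∀ x y : L, ⁅x, y⁆ = ((b'.coord 0) ⁅x, y⁆) • z := hkey
    have hreprz' : b'.repr z = Finsupp.single 0 1 := hreprz
    have hx3 : ∀ x : L, b'.repr x 0 • b' 0 + b'.repr x 1 • b' 1 + b'.repr x 2 • b' 2 = x := by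
      intro x
      have h := b'.sum_repr x
      rwa [Fin.sum_univ_three] at h
    have h21 : ⁅b' 2, b' 1⁆ = -⁅b' 1, b' 2⁆ := (lie_skew (b' 2) (b' 1)).symm
    have hzb : ∀ t : L, ⁅b' 0, t⁆ = 0 := by
      intro t
      rw [hb0']
      exact hzl t
    have hzb' : ∀ t : L, ⁅t, b' 0⁆ = 0 := by
      intro t
      rw [hb0']
      exact hzr t
    have hbr : ∀ x y : L, ⁅x, y⁆
        = (b'.repr x 1 * b'.repr y 2 - b'.repr x 2 * b'.repr y 1) • ⁅b' 1, b' 2⁆ := by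
      intro x y
      conv_lhs => rw [← hx3 x, ← hx3 y]
      simp only [add_lie, lie_add, smul_lie, lie_smul, hzb, hzb', lie_self, h21,
        smul_zero, zero_add, add_zero, smul_neg]
      rw [sub_smul, mul_smul, mul_smul]
      module
    have hBc : ∀ (x y : L) (i : Fin 3), b'.repr ⁅x, y⁆ i
        = (b'.coord 0) ⁅x, y⁆ * (if (0 : Fin 3) = i then 1 else 0) := by
      intro x y i
      conv_lhs => rw [hkey' x y]
      rw [map_smul, hreprz', Finsupp.smul_apply, Finsupp.single_apply, smul_eq_mul]
    have hBx : ∀ x y : L, (b'.coord 0) ⁅x, y⁆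
        = (b'.repr x 1 * b'.repr y 2 - b'.repr x 2 * b'.repr y 1)
          * (b'.coord 0) ⁅b' 1, b' 2⁆ := by
      intro x y
      conv_lhs => rw [hbr x y]
      rw [map_smul, smul_eq_mul]
    have hker : eshS k L = LinearMap.ker (eshTheta b' (id : Fin 3 → Fin 3)) := by
      apply le_antisymm
      · rw [eshS, Submodule.span_le]
        rintro t (⟨x, rfl⟩ | ⟨u, v, w, rfl⟩) <;> rw [SetLike.mem_coe, LinearMap.mem_ker]
        · exact eshTheta_tmul_self b' _ x
        · rw [map_add, map_sub]
          funext p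
          rw [Pi.add_apply, Pi.sub_apply, Pi.zero_apply, eshTheta_tmul, eshTheta_tmul,
            eshTheta_tmul]
          simp only [id_eq]
          simp only [hBc]
          rw [hBx u v, hBx v w, hBx u w]
          have hJ : ¬((0 : Fin 3) = p.1) := by
            intro h
            have h2 := eshPairFst_lt p
            rw [← h] at h2
            exact (Fin.not_lt_zero _) h2
          rw [if_neg hJ]
          by_cases hF : (0 : Fin 3) = eshPairFst p
          · rw [if_pos hF, ← hF]
            have hp1 : p.1 = 1 ∨ p.1 = 2 := by
              have h1 : (p.1 : ℕ) < 3 := p.1.isLt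
              have h2 : ¬((p.1 : ℕ) = 0) := by
                intro h3
                exact hJ (Fin.ext h3.symm)
              have h4 : (p.1 : ℕ) = 1 ∨ (p.1 : ℕ) = 2 := by omega
              rcases h4 with h | h
              · exact Or.inl (Fin.ext h)
              · exact Or.inr (Fin.ext h)
            rcases hp1 with h | h <;> rw [h] <;> ring
          · rw [if_neg hF]
            ring
      · rw [eshTheta_ker b' _ strictMono_id, Submodule.span_le]
        rintro t (⟨x, rfl⟩ | ⟨j, y, hj, h⟩)
        · exact eshS_self_mem x
        · exact absurd ⟨j, rfl⟩ hj
    have hsurj := eshTheta_surjective b' (id : Fin 3 → Fin 3) strictMono_id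
    have e2 : ((L ⊗[k] L) ⧸ eshS k L) ≃ₗ[k] (EshPair 3 → k) :=
      (Submodule.quotEquivOfEq _ _ hker).trans
        ((eshTheta b' (id : Fin 3 → Fin 3)).quotKerEquivOfSurjective hsurj)
    rw [hEq, e2.finrank_eq, Module.finrank_pi, eshPair_card]
  · -- the case m ≥ 2
    intro hm2
    have hz_tmul : ∀ w : L, z ⊗ₜ[k] w ∈ eshS k L := by
      intro w
      have hBex : ∃ u v : L, ⁅u, w⁆ = 0 ∧ ⁅v, w⁆ = 0 ∧ ⁅u, v⁆ ≠ 0 := by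
        by_contra hno
        push_neg at hno
        set Kw := LinearMap.ker (LieAlgebra.ad k L w) with hKw
        have hKwmem : ∀ u : L, u ∈ Kw ↔ ⁅u, w⁆ = 0 := by
          intro u
          rw [hKw, LinearMap.mem_ker, LieAlgebra.ad_apply]
          constructor
          · intro h
            rw [← lie_skew, h, neg_zero]
          · intro h
            rw [← lie_skew, h, neg_zero]
        have hKwdim : 2 * m ≤ finrank k Kw := by
          have h1 := LinearMap.finrank_range_add_finrank_ker (LieAlgebra.ad k L w)
          have h2 : finrank k (LinearMap.range (LieAlgebra.ad k L w)) ≤ 1 := by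
            have hle : LinearMap.range (LieAlgebra.ad k L w) ≤ Submodule.span k {z} := by
              rw [hspanZ]
              rintro x ⟨u, rfl⟩
              exact hbrmem w u
            exact (Submodule.finrank_mono hle).trans (le_of_eq hWdim)
          rw [hdim] at h1
          rw [← hKw] at h1
          omega
        by_cases hKtop : Kw = ⊤
        · have hall : ∀ u v : L, ⁅u, v⁆ = 0 := by
            intro u v
            apply hno u v
            · rw [← hKwmem u, hKtop]; exact Submodule.mem_top
            · rw [← hKwmem v, hKtop]; exact Submodule.mem_top
          have hder : derived k L = ⊥ := by
            unfold derived
            rw [LieSubmodule.lie_eq_bot_iff]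
            intro x _ y _
            exact hall x y
          rw [hder] at hz
          exact hz0 ((LieSubmodule.mem_bot z).mp hz)
        · obtain ⟨y₀, hy₀⟩ : ∃ y₀ : L, y₀ ∉ Kw := by
            by_contra hno2
            push_neg at hno2
            exact hKtop (eq_top_iff.mpr fun x _ => hno2 x)
          set K2 := LinearMap.ker ((b.coord 0) ∘ₗ LieAlgebra.ad k L y₀) with hK2
          have hK2dim : 2 * m ≤ finrank k K2 := by
            have h1 := LinearMap.finrank_range_add_finrank_ker
              ((b.coord 0) ∘ₗ LieAlgebra.ad k L y₀)
            have h2 : finrank k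
                (LinearMap.range ((b.coord 0) ∘ₗ LieAlgebra.ad k L y₀)) ≤ 1 := by
              have h3 := Submodule.finrank_le
                (LinearMap.range ((b.coord 0) ∘ₗ LieAlgebra.ad k L y₀))
              rwa [finrank_self] at h3
            rw [hdim] at h1
            rw [← hK2] at h1
            omega
          have hsup : Kw ⊔ Submodule.span k {y₀} = ⊤ := by
            apply Submodule.eq_top_of_finrank_eq
            have hlt : Kw < Kw ⊔ Submodule.span k {y₀} := by
              rw [lt_iff_le_and_ne]
              refine ⟨le_sup_left, ?_⟩
              intro hEqq
              apply hy₀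
              rw [hEqq]
              exact Submodule.mem_sup_right (Submodule.mem_span_singleton_self y₀)
            have h3 := Submodule.finrank_lt_finrank_of_lt hlt
            have h4 := Submodule.finrank_le (Kw ⊔ Submodule.span k {y₀})
            rw [hdim] at h4 ⊢
            omega
          have hinf : Kw ⊓ K2 ≤ Submodule.span k {z} := by
            intro x hx
            rw [Submodule.mem_inf] at hx
            obtain ⟨hx1, hx2⟩ := hx
            rw [hspanZ]
            have hxc : x ∈ LieAlgebra.center k L := by
              rw [LieModule.mem_maxTrivSubmodule]
              intro t
              have ht : t ∈ Kw ⊔ Submodule.span k {y₀} := by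
                rw [hsup]; exact Submodule.mem_top
              rw [Submodule.mem_sup] at ht
              obtain ⟨s, hs, r, hr, rfl⟩ := ht
              obtain ⟨c, rfl⟩ := Submodule.mem_span_singleton.mp hr
              have h5 : ⁅s, x⁆ = 0 := hno s x ((hKwmem s).mp hs) ((hKwmem x).mp hx1)
              have h6 : ⁅y₀, x⁆ = 0 := by
                have h7 : (b.coord 0) ⁅y₀, x⁆ = 0 := by
                  have h8 := hx2
                  rwa [hK2, LinearMap.mem_ker, LinearMap.comp_apply,
                    LieAlgebra.ad_apply] at h8
                rw [hkey y₀ x, h7, zero_smul]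
              rw [add_lie, h5, smul_lie, h6, smul_zero, add_zero]
            rw [← hZc] at hxc
            exact hxc
          have hinfdim := Submodule.finrank_sup_add_finrank_inf_eq Kw K2
          have h8 := Submodule.finrank_le (Kw ⊔ K2)
          have h9 := Submodule.finrank_mono hinf
          rw [hWdim] at h9
          rw [hdim] at h8
          omega
      obtain ⟨u, v, hu, hv, huv⟩ := hBex
      have hgen := eshS_gen5_mem (k := k) u v w
      rw [hu, hv, TensorProduct.tmul_zero, TensorProduct.tmul_zero, sub_zero,
        add_zero] at hgen
      rw [hkey u v, ← TensorProduct.smul_tmul'] at hgen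
      have hc0 : (b.coord 0) ⁅u, v⁆ ≠ 0 := by
        intro h
        apply huv
        rw [hkey u v, h, zero_smul]
      have hsm := Submodule.smul_mem (eshS k L) ((b.coord 0) ⁅u, v⁆)⁻¹ hgen
      rwa [smul_smul, inv_mul_cancel₀ hc0, one_smul] at hsm
    have h0r : (0 : Fin (2 * m + 1)) ∉ Set.range (Fin.succ : Fin (2 * m) → Fin (2 * m + 1)) := by
      rintro ⟨i, hi⟩
      exact Fin.succ_ne_zero i hi
    have hker : eshS k L
        = LinearMap.ker (eshTheta b (Fin.succ : Fin (2 * m) → Fin (2 * m + 1))) := by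
      rw [eshTheta_ker b _ Fin.strictMono_succ]
      apply le_antisymm
      · rw [eshS, Submodule.span_le]
        rintro t (⟨x, rfl⟩ | ⟨u, v, w, rfl⟩)
        · exact Submodule.subset_span (Or.inl ⟨x, rfl⟩)
        · rw [SetLike.mem_coe]
          rw [hkey u v, hkey v w, hkey u w, ← TensorProduct.smul_tmul',
            TensorProduct.tmul_smul, TensorProduct.tmul_smul]
          refine add_mem (sub_mem (Submodule.smul_mem _ _ ?_) (Submodule.smul_mem _ _ ?_))
            (Submodule.smul_mem _ _ ?_)
          · exact Submodule.subset_span (Or.inr ⟨0, w, h0r, Or.inl (by rw [hb0])⟩)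
          · exact Submodule.subset_span (Or.inr ⟨0, u, h0r, Or.inr (by rw [hb0])⟩)
          · exact Submodule.subset_span (Or.inr ⟨0, v, h0r, Or.inr (by rw [hb0])⟩)
      · rw [Submodule.span_le]
        rintro t (⟨x, rfl⟩ | ⟨j, y, hj, (rfl | rfl)⟩) <;> rw [SetLike.mem_coe]
        · exact eshS_self_mem x
        · rcases Fin.eq_zero_or_eq_succ j with rfl | ⟨i, rfl⟩
          · rw [hb0]
            exact hz_tmul y
          · exact absurd ⟨i, rfl⟩ hj
        · rcases Fin.eq_zero_or_eq_succ j with rfl | ⟨i, rfl⟩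
          · rw [hb0]
            have hsub := sub_mem (eshS_sym_mem (k := k) z y) (hz_tmul y)
            rwa [add_sub_cancel_left] at hsub
          · exact absurd ⟨i, rfl⟩ hj
    have hsurj := eshTheta_surjective b (Fin.succ : Fin (2 * m) → Fin (2 * m + 1))
      Fin.strictMono_succ
    have e2 : ((L ⊗[k] L) ⧸ eshS k L) ≃ₗ[k] (EshPair (2 * m) → k) :=
      (Submodule.quotEquivOfEq _ _ hker).trans
        ((eshTheta b (Fin.succ : Fin (2 * m) → Fin (2 * m + 1))).quotKerEquivOfSurjective hsurj)
    rw [hEq, e2.finrank_eq, Module.finrank_pi, eshPair_card]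
    obtain ⟨m', rfl⟩ : ∃ m', m = m' + 2 := ⟨m - 2, by omega⟩
    rw [show 2 * (m' + 2) - 1 = 2 * m' + 3 from by omega]
    rw [show 2 * (m' + 2) * (2 * m' + 3) = (2 * (m' * m') + 7 * m' + 6) * 2 from by ring]
    rw [Nat.mul_div_cancel _ two_pos]
    rw [show 2 * (m' + 2) ^ 2 = 2 * (m' * m') + 8 * m' + 8 from by ring]
    omega
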